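/- Let f : ℝ → ℝ be nonnegative, continuous, and of linear growth. Then the discretely averaged option price converges to the continuously averaged one: lim_{d→∞} E[ f(S_A) ] = E[ f(S̄_T) ]. -/

import Mathlib

open MeasureTheory ProbabilityTheory Filter

open Real
open scoped NNReal ENNReal

lemma gauss_lintegral_exp (c : ℝ) (v : ℝ≥0) :
    ∫⁻ x, ENNReal.ofReal (rexp (c * x)) ∂(gaussianReal 0 v)
      = ENNReal.ofReal (rexp (c ^ 2 * v / 2)) := by
  rcases eq_or_ne v 0 with hv | hv
  · simp [hv, gaussianReal_zero_var, lintegral_dirac' _ ((measurable_const_mul c).exp.ennreal_ofReal)]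
  · have key : ∀ x : ℝ, rexp (c * x) * gaussianPDFReal 0 v x
        = rexp (c ^ 2 * v / 2) * gaussianPDFReal (c * v) v x := by
      intro x
      have hv' : (v : ℝ) ≠ 0 := by exact_mod_cast hv
      simp only [gaussianPDFReal]
      rw [mul_left_comm (rexp (c*x)), ← Real.exp_add, mul_left_comm (rexp (c^2*v/2)),
        ← Real.exp_add]
      congr 1
      rw [Real.exp_eq_exp]
      field_simp
      ring
    rw [gaussianReal_of_var_ne_zero _ hv]
    rw [lintegral_withDensity_eq_lintegral_mul _ (measurable_gaussianPDF 0 v)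
      ((measurable_const_mul c).exp.ennreal_ofReal)]
    have : ∀ x : ℝ, (gaussianPDF 0 v * fun x => ENNReal.ofReal (rexp (c * x))) x
        = ENNReal.ofReal (rexp (c ^ 2 * v / 2) * gaussianPDFReal (c * v) v x) := by
      intro x
      simp only [Pi.mul_apply, gaussianPDF]
      rw [← ENNReal.ofReal_mul (gaussianPDFReal_nonneg 0 v x), mul_comm (gaussianPDFReal 0 v x),
        key x]
    simp_rw [this, ENNReal.ofReal_mul (Real.exp_pos _).le]
    rw [lintegral_const_mul' _ _ ENNReal.ofReal_ne_top,
      lintegral_gaussianPDFReal_eq_one (c * v) hv, mul_one]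

lemma gauss_integrable_exp (c : ℝ) (v : ℝ≥0) :
    Integrable (fun x => rexp (c * x)) (gaussianReal 0 v) := by
  refine ⟨(Real.continuous_exp.comp (continuous_const.mul continuous_id)).aestronglyMeasurable, ?_⟩
  rw [hasFiniteIntegral_iff_ofReal (Eventually.of_forall fun x => (Real.exp_pos _).le)]
  rw [gauss_lintegral_exp]
  exact ENNReal.ofReal_lt_top

lemma gauss_integral_exp (c : ℝ) (v : ℝ≥0) :
    ∫ x, rexp (c * x) ∂(gaussianReal 0 v) = rexp (c ^ 2 * v / 2) := by
  rw [integral_eq_lintegral_of_nonneg_ae (Eventually.of_forall fun x => (Real.exp_pos _).le)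
    (gauss_integrable_exp c v).1, gauss_lintegral_exp, ENNReal.toReal_ofReal (Real.exp_pos _).le]

lemma riemann_sum_tendsto {T : ℝ} (hT : 0 < T) {g : ℝ → ℝ} (hg : Continuous g) :
    Tendsto (fun d : ℕ => (1 / (d : ℝ)) * ∑ j ∈ Finset.Icc 1 d, g ((j : ℝ) * T / d)) atTop
      (nhds ((1 / T) * ∫ t in (0:ℝ)..T, g t)) := by
  have key : Tendsto (fun d : ℕ => ∑ j ∈ Finset.Icc 1 d, (T / (d : ℝ)) * g ((j : ℝ) * T / d))
      atTop (nhds (∫ t in (0:ℝ)..T, g t)) := by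
    rw [Metric.tendsto_atTop]
    intro ε hε
    have hε' : 0 < ε / (2 * T) := by positivity
    obtain ⟨δ, hδ, H⟩ := Metric.uniformContinuousOn_iff.mp
      ((isCompact_Icc (a := (0:ℝ)) (b := T)).uniformContinuousOn_of_continuous
        hg.continuousOn) (ε / (2 * T)) hε'
    obtain ⟨N₀, hN₀⟩ := exists_nat_gt (T / δ)
    refine ⟨N₀ + 1, fun d hd => ?_⟩
    have hd1 : 1 ≤ d := le_trans (Nat.le_add_left 1 N₀) hd
    have hdpos : (0:ℝ) < d := by exact_mod_cast Nat.lt_of_lt_of_le Nat.zero_lt_one hd1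
    have hdne : (d:ℝ) ≠ 0 := ne_of_gt hdpos
    have hmesh : T / d < δ := by
      rw [div_lt_iff₀ hdpos]
      have h2 : (N₀ : ℝ) ≤ d := by exact_mod_cast le_trans (Nat.le_succ N₀) hd
      have h1 : T / δ < (d : ℝ) := lt_of_lt_of_le hN₀ h2
      calc T = (T / δ) * δ := by field_simp
        _ < d * δ := mul_lt_mul_of_pos_right h1 hδ
        _ = δ * d := mul_comm _ _
    set a : ℕ → ℝ := fun k => (k : ℝ) * T / d with ha
    have hstep : ∀ k : ℕ, a (k + 1) - a k = T / d := by
      intro k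
      simp only [ha, Nat.cast_add, Nat.cast_one]
      field_simp
      ring
    have hmono : ∀ k : ℕ, a k ≤ a (k + 1) := by
      intro k
      have := hstep k
      nlinarith [div_pos hT hdpos]
    have hsum : ∑ k ∈ Finset.range d, ∫ t in a k..a (k + 1), g t = ∫ t in (0:ℝ)..T, g t := by
      rw [intervalIntegral.sum_integral_adjacent_intervals
        (fun k _ => hg.intervalIntegrable _ _)]
      have h0 : a 0 = 0 := by simp [ha]
      have hdT : a d = T := by simp only [ha]; field_simp
      rw [h0, hdT]
    have hreindex : ∑ j ∈ Finset.Icc 1 d, (T / (d : ℝ)) * g ((j : ℝ) * T / d)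
        = ∑ k ∈ Finset.range d, (T / (d : ℝ)) * g (a (k + 1)) := by
      rw [← Finset.Ico_add_one_right_eq_Icc, Finset.sum_Ico_eq_sum_range, Nat.add_sub_cancel]
      refine Finset.sum_congr rfl fun k _ => ?_
      simp only [ha]
      congr 2
      push_cast
      ring
    have hbound : ∀ k ∈ Finset.range d,
        ‖(T / (d : ℝ)) * g (a (k + 1)) - ∫ t in a k..a (k + 1), g t‖ ≤ ε / (2 * T) * (T / d) := by
      intro k hk
      have hk' : k + 1 ≤ d := Finset.mem_range.mp hk
      have hIcc : ∀ x, x ∈ Set.Icc (a k) (a (k + 1)) → x ∈ Set.Icc (0:ℝ) T := by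
        intro x hx
        constructor
        · refine le_trans ?_ hx.1
          simp only [ha]
          positivity
        · refine le_trans hx.2 ?_
          simp only [ha]
          rw [div_le_iff₀ hdpos]
          have : ((k:ℝ) + 1) ≤ (d : ℝ) := by exact_mod_cast hk'
          push_cast
          nlinarith
      have hconst : (T / (d : ℝ)) * g (a (k + 1))
          = ∫ _t in a k..a (k + 1), g (a (k + 1)) := by
        rw [intervalIntegral.integral_const, hstep k, smul_eq_mul]
      rw [hconst, ← intervalIntegral.integral_sub (intervalIntegrable_const)
        (hg.intervalIntegrable _ _)]
      have := intervalIntegral.norm_integral_le_of_norm_le_const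
        (C := ε / (2 * T)) (f := fun t => g (a (k + 1)) - g t) (a := a k) (b := a (k + 1)) ?_
      · rw [hstep k] at this
        calc ‖∫ t in a k..a (k+1), (g (a (k+1)) - g t)‖ ≤ ε / (2*T) * |T / d| := this
          _ = ε / (2*T) * (T / d) := by rw [abs_of_pos (div_pos hT hdpos)]
      · intro x hx
        rw [Set.uIoc_of_le (hmono k)] at hx
        have hx1 : x ∈ Set.Icc (0:ℝ) T := hIcc x ⟨le_of_lt hx.1, hx.2⟩
        have hx2 : a (k + 1) ∈ Set.Icc (0:ℝ) T := hIcc _ ⟨hmono k, le_refl _⟩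
        have hdist : dist (a (k+1)) x < δ := by
          rw [Real.dist_eq, abs_of_nonneg (by linarith [hx.2])]
          have := hstep k
          linarith [hx.1, hmesh]
        have := H _ hx2 _ hx1 hdist
        rw [Real.dist_eq] at this
        exact le_of_lt this
    rw [Real.dist_eq, hreindex, ← hsum, ← Finset.sum_sub_distrib]
    calc |∑ k ∈ Finset.range d, ((T / (d:ℝ)) * g (a (k+1)) - ∫ t in a k..a (k+1), g t)|
        ≤ ∑ k ∈ Finset.range d, ‖(T / (d:ℝ)) * g (a (k+1)) - ∫ t in a k..a (k+1), g t‖ :=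
          Finset.abs_sum_le_sum_abs _ _
      _ ≤ ∑ _k ∈ Finset.range d, ε / (2 * T) * (T / d) := Finset.sum_le_sum hbound
      _ = d * (ε / (2 * T) * (T / d)) := by rw [Finset.sum_const, Finset.card_range, nsmul_eq_mul]
      _ = ε / 2 := by field_simp
      _ < ε := by linarith
  have : (fun d : ℕ => (1 / (d : ℝ)) * ∑ j ∈ Finset.Icc 1 d, g ((j : ℝ) * T / d))
      = fun d : ℕ => (1 / T) * ∑ j ∈ Finset.Icc 1 d, (T / (d : ℝ)) * g ((j : ℝ) * T / d) := by
    funext d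
    rw [Finset.mul_sum, Finset.mul_sum]
    refine Finset.sum_congr rfl fun j _ => ?_
    rw [← mul_assoc]
    congr 1
    field_simp
  rw [this]
  exact key.const_mul _

lemma ennreal_limsup_add_liminf_le (u v : ℕ → ℝ≥0∞) :
    limsup u atTop + liminf v atTop ≤ limsup (fun n => u n + v n) atTop := by
  rw [limsup_eq_iInf_iSup_of_nat, liminf_eq_iSup_iInf_of_nat,
    limsup_eq_iInf_iSup_of_nat (u := fun n => u n + v n)]
  refine le_iInf fun n => ?_
  rw [ENNReal.add_iSup]
  refine iSup_le fun m => ?_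
  set N := max n m with hN
  calc (⨅ k : ℕ, ⨆ i ≥ k, u i) + ⨅ j ≥ m, v j
      ≤ (⨆ i ≥ N, u i) + ⨅ j ≥ N, v j := by
        refine add_le_add (iInf_le _ N) ?_
        exact le_iInf₂ fun j hj => iInf₂_le j (le_trans (le_max_right n m) hj)
    _ ≤ ⨆ i ≥ N, (u i + v i) := by
        rw [ENNReal.biSup_add' ⟨N, le_refl N⟩]
        refine iSup₂_le fun i hi => ?_
        refine le_iSup₂_of_le i hi (add_le_add le_rfl ?_)
        exact iInf₂_le i hi
    _ ≤ ⨆ i ≥ n, (u i + v i) := by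
        refine iSup₂_le fun i hi => le_iSup₂_of_le i (le_trans (le_max_left n m) hi) le_rfl

lemma pratt {Ω : Type*} [MeasurableSpace Ω] {μ : Measure Ω} [IsProbabilityMeasure μ]
    {F : ℕ → Ω → ℝ} {f : Ω → ℝ} {G : ℕ → Ω → ℝ} {g : Ω → ℝ}
    (hFm : ∀ n, AEStronglyMeasurable (F n) μ) (hfm : AEStronglyMeasurable f μ)
    (hGi : ∀ n, Integrable (G n) μ) (hgi : Integrable g μ)
    (hF0 : ∀ n ω, 0 ≤ F n ω) (hle : ∀ n ω, F n ω ≤ G n ω)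
    (hFt : ∀ ω, Tendsto (fun n => F n ω) atTop (nhds (f ω)))
    (hGt : ∀ ω, Tendsto (fun n => G n ω) atTop (nhds (g ω)))
    (hGint : Tendsto (fun n => ∫ ω, G n ω ∂μ) atTop (nhds (∫ ω, g ω ∂μ))) :
    Tendsto (fun n => ∫ ω, F n ω ∂μ) atTop (nhds (∫ ω, f ω ∂μ)) := by
  have hf0 : ∀ ω, 0 ≤ f ω := fun ω => ge_of_tendsto' (hFt ω) (fun n => hF0 n ω)
  have hfg : ∀ ω, f ω ≤ g ω := fun ω =>
    le_of_tendsto_of_tendsto' (hFt ω) (hGt ω) (fun n => hle n ω)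
  have hg0 : ∀ ω, 0 ≤ g ω := fun ω => le_trans (hf0 ω) (hfg ω)
  have hFi : ∀ n, Integrable (F n) μ := fun n => (hGi n).mono' (hFm n)
    (Eventually.of_forall fun ω => by
      rw [Real.norm_eq_abs, abs_of_nonneg (hF0 n ω)]; exact hle n ω)
  have hfi : Integrable f μ := hgi.mono' hfm
    (Eventually.of_forall fun ω => by
      rw [Real.norm_eq_abs, abs_of_nonneg (hf0 ω)]; exact hfg ω)
  set F' : ℕ → Ω → ℝ≥0∞ := fun n ω => ENNReal.ofReal (F n ω) with hF'
  set G' : ℕ → Ω → ℝ≥0∞ := fun n ω => ENNReal.ofReal (G n ω) with hG'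
  set f' : Ω → ℝ≥0∞ := fun ω => ENNReal.ofReal (f ω) with hf'
  set g' : Ω → ℝ≥0∞ := fun ω => ENNReal.ofReal (g ω) with hg'
  have hF'm : ∀ n, AEMeasurable (F' n) μ := fun n => (hFm n).aemeasurable.ennreal_ofReal
  have hf'm : AEMeasurable f' μ := hfm.aemeasurable.ennreal_ofReal
  have hFeq : ∀ n, ENNReal.ofReal (∫ ω, F n ω ∂μ) = ∫⁻ ω, F' n ω ∂μ := fun n =>
    ofReal_integral_eq_lintegral_ofReal (hFi n) (Eventually.of_forall (hF0 n))
  have hGeq : ∀ n, ENNReal.ofReal (∫ ω, G n ω ∂μ) = ∫⁻ ω, G' n ω ∂μ := fun n =>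
    ofReal_integral_eq_lintegral_ofReal (hGi n)
      (Eventually.of_forall fun ω => le_trans (hF0 n ω) (hle n ω))
  have hfeq : ENNReal.ofReal (∫ ω, f ω ∂μ) = ∫⁻ ω, f' ω ∂μ :=
    ofReal_integral_eq_lintegral_ofReal hfi (Eventually.of_forall hf0)
  have hgeq : ENNReal.ofReal (∫ ω, g ω ∂μ) = ∫⁻ ω, g' ω ∂μ :=
    ofReal_integral_eq_lintegral_ofReal hgi (Eventually.of_forall hg0)
  have hgfin : ∫⁻ ω, g' ω ∂μ < ⊤ := by rw [← hgeq]; exact ENNReal.ofReal_lt_top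
  have hffin : ∫⁻ ω, f' ω ∂μ < ⊤ := lt_of_le_of_lt
    (lintegral_mono fun ω => ENNReal.ofReal_le_ofReal (hfg ω)) hgfin
  -- difference functions
  have hH'meas : ∀ n, AEMeasurable (fun ω => G' n ω - F' n ω) μ := fun n =>
    ((hGi n).aestronglyMeasurable.aemeasurable.ennreal_ofReal).sub (hF'm n)
  -- Fatou for F'
  have fatou1 : ∫⁻ ω, f' ω ∂μ ≤ liminf (fun n => ∫⁻ ω, F' n ω ∂μ) atTop := by
    refine le_trans (le_of_eq (lintegral_congr fun ω => ?_)) (lintegral_liminf_le' hF'm)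
    exact (((ENNReal.continuous_ofReal.tendsto _).comp (hFt ω)).liminf_eq).symm
  -- Fatou for the differences
  have fatou2 : ∫⁻ ω, (g' ω - f' ω) ∂μ ≤
      liminf (fun n => ∫⁻ ω, (G' n ω - F' n ω) ∂μ) atTop := by
    refine le_trans (le_of_eq (lintegral_congr fun ω => ?_)) (lintegral_liminf_le' hH'meas)
    have h1 : ∀ n, G' n ω - F' n ω = ENNReal.ofReal (G n ω - F n ω) := fun n =>
      (ENNReal.ofReal_sub _ (hF0 n ω)).symm
    have h2 : g' ω - f' ω = ENNReal.ofReal (g ω - f ω) :=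
      (ENNReal.ofReal_sub _ (hf0 ω)).symm
    simp_rw [h1, h2]
    exact (((ENNReal.continuous_ofReal.tendsto _).comp
      ((hGt ω).sub (hFt ω))).liminf_eq).symm
  -- additivity
  have hadd : ∀ n, ∫⁻ ω, G' n ω ∂μ
      = ∫⁻ ω, F' n ω ∂μ + ∫⁻ ω, (G' n ω - F' n ω) ∂μ := by
    intro n
    rw [← lintegral_add_left' (hF'm n)]
    refine lintegral_congr fun ω => ?_
    exact (add_tsub_cancel_of_le (ENNReal.ofReal_le_ofReal (hle n ω))).symm
  have haddf : ∫⁻ ω, g' ω ∂μ = ∫⁻ ω, f' ω ∂μ + ∫⁻ ω, (g' ω - f' ω) ∂μ := by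
    rw [← lintegral_add_left' hf'm]
    refine lintegral_congr fun ω => ?_
    exact (add_tsub_cancel_of_le (ENNReal.ofReal_le_ofReal (hfg ω))).symm
  have hdfin : ∫⁻ ω, (g' ω - f' ω) ∂μ ≠ ⊤ := by
    intro h
    rw [haddf, h, add_top] at hgfin
    exact (lt_irrefl _ hgfin).elim
  -- limit of lintegrals of G'
  have hG'lim : Tendsto (fun n => ∫⁻ ω, G' n ω ∂μ) atTop (nhds (∫⁻ ω, g' ω ∂μ)) := by
    rw [← hgeq]
    have := (ENNReal.continuous_ofReal.tendsto _).comp hGint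
    simpa only [Function.comp_def, hGeq] using this
  -- limsup bound
  have hlimsup : limsup (fun n => ∫⁻ ω, F' n ω ∂μ) atTop ≤ ∫⁻ ω, f' ω ∂μ := by
    have key : limsup (fun n => ∫⁻ ω, F' n ω ∂μ) atTop + ∫⁻ ω, (g' ω - f' ω) ∂μ
        ≤ ∫⁻ ω, f' ω ∂μ + ∫⁻ ω, (g' ω - f' ω) ∂μ := by
      calc limsup (fun n => ∫⁻ ω, F' n ω ∂μ) atTop + ∫⁻ ω, (g' ω - f' ω) ∂μ
          ≤ limsup (fun n => ∫⁻ ω, F' n ω ∂μ) atTop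
            + liminf (fun n => ∫⁻ ω, (G' n ω - F' n ω) ∂μ) atTop :=
            add_le_add le_rfl fatou2
        _ ≤ limsup (fun n => ∫⁻ ω, F' n ω ∂μ + ∫⁻ ω, (G' n ω - F' n ω) ∂μ) atTop :=
            ennreal_limsup_add_liminf_le _ _
        _ = limsup (fun n => ∫⁻ ω, G' n ω ∂μ) atTop := by simp_rw [← hadd]
        _ = ∫⁻ ω, g' ω ∂μ := hG'lim.limsup_eq
        _ = ∫⁻ ω, f' ω ∂μ + ∫⁻ ω, (g' ω - f' ω) ∂μ := haddf
    exact (ENNReal.add_le_add_iff_right hdfin).mp key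
  have main : Tendsto (fun n => ∫⁻ ω, F' n ω ∂μ) atTop (nhds (∫⁻ ω, f' ω ∂μ)) :=
    tendsto_of_le_liminf_of_limsup_le fatou1 hlimsup
  have conv : ∀ n, ∫ ω, F n ω ∂μ = (∫⁻ ω, F' n ω ∂μ).toReal := fun n => by
    rw [← hFeq, ENNReal.toReal_ofReal (integral_nonneg (hF0 n))]
  have convf : ∫ ω, f ω ∂μ = (∫⁻ ω, f' ω ∂μ).toReal := by
    rw [← hfeq, ENNReal.toReal_ofReal (integral_nonneg hf0)]
  simp_rw [conv, convf]
  exact (ENNReal.tendsto_toReal hffin.ne).comp main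

theorem stmt_11
    {Ω : Type*} [MeasurableSpace Ω] (P : Measure Ω) [IsProbabilityMeasure P]
    (W : ℝ → Ω → ℝ)
    (hWmeas : ∀ t : ℝ, Measurable (W t))
    (hW0 : ∀ ω : Ω, W 0 ω = 0)
    (hWcont : ∀ ω : Ω, Continuous fun t => W t ω)
    (hWgauss : ∀ s t : ℝ, 0 ≤ s → s ≤ t →
      Measure.map (fun ω => W t ω - W s ω) P = gaussianReal 0 (Real.toNNReal (t - s)))
    (hWindep : ∀ (n : ℕ) (ts : Fin (n + 1) → ℝ), Monotone ts → 0 ≤ ts 0 →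
      iIndepFun
        (fun (i : Fin n) (ω : Ω) => W (ts i.succ) ω - W (ts i.castSucc) ω) P)
    (T S0 σ r : ℝ) (hT : 0 < T) (hS0 : 0 < S0) (hσ : 0 < σ) (hr : 0 < r)
    (ω₀ : ℝ) (hω₀ : ω₀ = r - σ ^ 2 / 2)
    (S : ℝ → Ω → ℝ) (hS : ∀ t ω, S t ω = S0 * Real.exp (ω₀ * t + σ * W t ω))
    (Sbar : Ω → ℝ) (hSbar : ∀ ω, Sbar ω = (1 / T) * ∫ t in (0:ℝ)..T, S t ω)
    (SA : ℕ → Ω → ℝ)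
    (hSA : ∀ (d : ℕ) (ω : Ω),
      SA d ω = (1 / (d : ℝ)) * ∑ j ∈ Finset.Icc 1 d, S ((j : ℝ) * T / d) ω)
    (f : ℝ → ℝ) (hf0 : ∀ x, 0 ≤ f x) (hfc : Continuous f)
    (hfg : ∃ C > 0, ∀ x, |f x| ≤ C * (1 + |x|))
 :
    Tendsto (fun d : ℕ =>
        ∫ ω, f (SA d ω) ∂P) atTop
      (nhds (∫ ω, f (Sbar ω) ∂P)) := by
  obtain ⟨C, hC, hCf⟩ := hfg
  -- basic facts about S
  have hSfun : ∀ t, S t = fun ω => (S0 * rexp (ω₀ * t)) * rexp (σ * W t ω) :=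
    fun t => funext fun ω => by rw [hS, Real.exp_add]; ring
  have hSpos : ∀ t ω, 0 < S t ω := fun t ω => by rw [hS]; positivity
  have hSmeas : ∀ t, Measurable (S t) := by
    intro t
    rw [hSfun t]
    exact (Real.measurable_exp.comp ((hWmeas t).const_mul σ)).const_mul _
  have hScont : ∀ ω, Continuous fun t => S t ω := by
    intro ω
    have h : (fun t => S t ω) = fun t => S0 * rexp (ω₀ * t + σ * W t ω) :=
      funext fun t => hS t ω
    rw [h]
    exact continuous_const.mul (Real.continuous_exp.comp
      ((continuous_const.mul continuous_id).add (continuous_const.mul (hWcont ω))))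
  have hWmap : ∀ t : ℝ, 0 ≤ t → Measure.map (W t) P = gaussianReal 0 (Real.toNNReal t) := by
    intro t ht
    have h1 : (fun ω => W t ω - W 0 ω) = W t := funext fun ω => by rw [hW0, sub_zero]
    have := hWgauss 0 t le_rfl ht
    rwa [h1, sub_zero] at this
  have hexp_int : ∀ t : ℝ, 0 ≤ t → Integrable (fun ω => rexp (σ * W t ω)) P := by
    intro t ht
    have h := gauss_integrable_exp σ (Real.toNNReal t)
    rw [← hWmap t ht] at h
    exact (integrable_map_measure
      (Real.continuous_exp.comp (continuous_const.mul continuous_id)).aestronglyMeasurable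
      (hWmeas t).aemeasurable).mp h
  have hexp_eq : ∀ t : ℝ, 0 ≤ t → ∫ ω, rexp (σ * W t ω) ∂P = rexp (σ ^ 2 * t / 2) := by
    intro t ht
    have hms : AEStronglyMeasurable (fun x : ℝ => rexp (σ * x)) (Measure.map (W t) P) :=
      (Real.continuous_exp.comp (continuous_const.mul continuous_id)).aestronglyMeasurable
    have h : ∫ x, rexp (σ * x) ∂(Measure.map (W t) P) = ∫ ω, rexp (σ * W t ω) ∂P :=
      integral_map (hWmeas t).aemeasurable hms
    rw [← h, hWmap t ht, gauss_integral_exp, Real.coe_toNNReal t ht]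
  have hSint : ∀ t : ℝ, 0 ≤ t → Integrable (S t) P := by
    intro t ht
    rw [hSfun t]
    exact (hexp_int t ht).const_mul _
  have hSeq : ∀ t : ℝ, 0 ≤ t → ∫ ω, S t ω ∂P = S0 * rexp (r * t) := by
    intro t ht
    simp only [hSfun t]
    rw [integral_const_mul, hexp_eq t ht, mul_assoc, ← Real.exp_add]
    congr 2
    rw [hω₀]; ring
  -- facts about SA
  have hSA0 : ∀ d ω, 0 ≤ SA d ω := by
    intro d ω
    rw [hSA]
    exact mul_nonneg (by positivity) (Finset.sum_nonneg fun j _ => (hSpos _ _).le)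
  have hSAfun : ∀ d, SA d = fun ω =>
      (1 / (d : ℝ)) * ∑ j ∈ Finset.Icc 1 d, S ((j : ℝ) * T / d) ω :=
    fun d => funext fun ω => hSA d ω
  have hSAmeas : ∀ d, Measurable (SA d) := by
    intro d
    rw [hSAfun d]
    exact (Finset.measurable_sum _ fun j _ => hSmeas _).const_mul _
  have htj : ∀ (d : ℕ) (j : ℕ), (0:ℝ) ≤ (j : ℝ) * T / d := by
    intro d j; positivity
  have hSAint : ∀ d, Integrable (SA d) P := by
    intro d
    rw [hSAfun d]
    exact (integrable_finset_sum _ fun j _ => hSint _ (htj d j)).const_mul _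
  have hSAval : ∀ d, ∫ ω, SA d ω ∂P
      = (1 / (d : ℝ)) * ∑ j ∈ Finset.Icc 1 d, S0 * rexp (r * ((j : ℝ) * T / d)) := by
    intro d
    simp only [hSAfun d]
    rw [integral_const_mul, integral_finset_sum _ fun j _ => hSint _ (htj d j)]
    congr 1
    exact Finset.sum_congr rfl fun j _ => hSeq _ (htj d j)
  -- limit of the means
  set I : ℝ := (1 / T) * ∫ t in (0:ℝ)..T, S0 * rexp (r * t) with hI
  have hmean : Tendsto (fun d => ∫ ω, SA d ω ∂P) atTop (nhds I) := by
    have h := riemann_sum_tendsto hT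
      (g := fun t => S0 * rexp (r * t))
      (continuous_const.mul (Real.continuous_exp.comp (continuous_const.mul continuous_id)))
    simpa only [← hSAval] using h
  -- joint measurability and Fubini
  have hjoint : Measurable (Function.uncurry S) :=
    measurable_uncurry_of_continuous_of_measurable hScont hSmeas
  set μT : Measure ℝ := volume.restrict (Set.Ioc (0:ℝ) T) with hμT
  have hprodint : Integrable (Function.uncurry S) (μT.prod P) := by
    refine ⟨hjoint.aestronglyMeasurable, ?_⟩
    have hnn : ∀ p : ℝ × Ω, 0 ≤ Function.uncurry S p := fun p => (hSpos p.1 p.2).le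
    rw [hasFiniteIntegral_iff_ofReal (Eventually.of_forall hnn)]
    rw [lintegral_prod _ hjoint.ennreal_ofReal.aemeasurable]
    have hinner : ∀ t ∈ Set.Ioc (0:ℝ) T,
        ∫⁻ ω, ENNReal.ofReal (Function.uncurry S (t, ω)) ∂P
          = ENNReal.ofReal (S0 * rexp (r * t)) := by
      intro t ht
      simp only [Function.uncurry_apply_pair]
      rw [← ofReal_integral_eq_lintegral_ofReal (hSint t ht.1.le)
        (Eventually.of_forall fun ω => (hSpos t ω).le), hSeq t ht.1.le]
    calc ∫⁻ t, (∫⁻ ω, ENNReal.ofReal (Function.uncurry S (t, ω)) ∂P) ∂μT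
        ≤ ∫⁻ _t, ENNReal.ofReal (S0 * rexp (r * T)) ∂μT := by
          refine setLIntegral_mono measurable_const ?_
          intro t ht
          rw [hinner t ht]
          refine ENNReal.ofReal_le_ofReal ?_
          have : rexp (r * t) ≤ rexp (r * T) :=
            Real.exp_le_exp.mpr (mul_le_mul_of_nonneg_left ht.2 hr.le)
          nlinarith
      _ = ENNReal.ofReal (S0 * rexp (r * T)) * volume (Set.Ioc (0:ℝ) T) := by
          rw [hμT, setLIntegral_const]
      _ < ⊤ := by
          rw [Real.volume_Ioc]
          exact ENNReal.mul_lt_top ENNReal.ofReal_lt_top ENNReal.ofReal_lt_top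
  have hSbarfun : Sbar = fun ω => (1 / T) * ∫ t, S t ω ∂μT := by
    funext ω
    rw [hSbar, intervalIntegral.integral_of_le hT.le]
  have hSbarInt : Integrable Sbar P := by
    have h := hprodint.integral_prod_right
    simp only [Function.uncurry_apply_pair] at h
    rw [hSbarfun]
    exact h.const_mul _
  have hSbarval : ∫ ω, Sbar ω ∂P = I := by
    simp only [hSbarfun]
    rw [integral_const_mul, ← integral_integral_swap hprodint, hI,
      intervalIntegral.integral_of_le hT.le]
    congr 1
    refine setIntegral_congr_fun measurableSet_Ioc fun t ht => ?_
    exact hSeq t ht.1.le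
  -- pointwise convergence
  have hptw : ∀ ω, Tendsto (fun d => SA d ω) atTop (nhds (Sbar ω)) := by
    intro ω
    have h := riemann_sum_tendsto hT (g := fun t => S t ω) (hScont ω)
    simp_rw [← hSA, ← hSbar] at h
    exact h
  -- apply Pratt's lemma
  have hGval : ∀ d, ∫ ω, C * (1 + SA d ω) ∂P = C * (1 + ∫ ω, SA d ω ∂P) := by
    intro d
    rw [integral_const_mul, integral_add (integrable_const 1) (hSAint d), integral_const]
    simp [measure_univ]
  have hgval : ∫ ω, C * (1 + Sbar ω) ∂P = C * (1 + I) := by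
    rw [integral_const_mul, integral_add (integrable_const 1) hSbarInt, integral_const,
      hSbarval]
    simp [measure_univ]
  refine pratt (G := fun d ω => C * (1 + SA d ω)) (g := fun ω => C * (1 + Sbar ω))
    (fun d => hfc.comp_aestronglyMeasurable (hSAmeas d).aestronglyMeasurable)
    (hfc.comp_aestronglyMeasurable hSbarInt.1)
    (fun d => ((integrable_const 1).add (hSAint d)).const_mul C)
    (((integrable_const 1).add hSbarInt).const_mul C)
    (fun d ω => hf0 _) ?_ ?_ ?_ ?_
  · intro d ω
    calc f (SA d ω) ≤ |f (SA d ω)| := le_abs_self _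
      _ ≤ C * (1 + |SA d ω|) := hCf _
      _ = C * (1 + SA d ω) := by rw [abs_of_nonneg (hSA0 d ω)]
  · exact fun ω => (hfc.tendsto _).comp (hptw ω)
  · exact fun ω => (tendsto_const_nhds.add (hptw ω)).const_mul C
  · simp_rw [hGval, hgval]
    exact (tendsto_const_nhds.add hmean).const_mul C
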